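/- Let C be a category and M a monad on C with multiplication m : M∘M → M and unit e : Id → M. Define a 'categorical theory' T_M with: objects the objects of C; 1-morphisms x → y the C-morphisms Mx → y; and for a chain of 1-morphisms f_i : Mx_{i-1} → x_i (i = 1,…,n) and g : Mx_0 → x_n, the n-ary 2-multimaps f → g being the witnesses (if any) of commutativity of the square comparing f_n ∘ Mf_{n-1} ∘ ⋯ ∘ M^{n-1}f_1 ∘ (n-fold multiplication M^n x_0 → M x_0) with g, with composition defined in the obvious way. Then a monoid in T_M — i.e., an object x together with a 1-morphism a : Mx → x and compatible 2-multimaps from every iterate to a, including the nullary one from the unit — is precisely an M-algebra structure on x in the usual Eilenberg–Moore sense: a : Mx → x with a ∘ e_x = id_x and a ∘ m_x = a ∘ Ma. -/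

import Mathlib

open CategoryTheory

universe v u

variable {C : Type u} [Category.{v} C]

/-- The `n`-th power of the endofunctor of a monad. -/
def monadPow (M : Monad C) : ℕ → (C ⥤ C)
  | 0 => 𝟭 C
  | n + 1 => monadPow M n ⋙ M.toFunctor

/-- The `n`-fold multiplication `M^n ⟶ M` (for `n = 0` the unit `Id ⟶ M`);
this is well defined thanks to the associativity of the monad. -/
def monadMu (M : Monad C) : ∀ n : ℕ, monadPow M n ⟶ M.toFunctor
  | 0 => M.η
  | n + 1 => Functor.whiskerRight (monadMu M n) M.toFunctor ≫ M.μ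

/-- The composite `a ∘ M a ∘ ⋯ ∘ M^{n-1} a : M^n x ⟶ x` of the constant
nerve of 1-morphisms in the categorical theory `T_M` determined by
`a : M x ⟶ x` (for `n = 0`, the identity of `x`). -/
def algIter (M : Monad C) (x : C) (a : M.obj x ⟶ x) : ∀ n : ℕ, (monadPow M n).obj x ⟶ x
  | 0 => 𝟙 x
  | n + 1 => M.map (algIter M x a n) ≫ a

/-- Let `M` be a monad on `C` and let `T_M` be the categorical
theory with objects the objects of `C`, 1-morphisms `x → y` the `C`-morphisms
`M x ⟶ y`, and whose `n`-ary 2-multimaps `(f₁,…,f_n) → g` are the witnesses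
of the commutativity `f_n ∘ M f_{n-1} ∘ ⋯ ∘ M^{n-1} f₁ = g ∘ (n`-fold
multiplication`)`.  Then a monoid in `T_M` — an object `x` with a 1-morphism
`a : M x ⟶ x` and compatible 2-multimaps from every iterate of `a` to `a`,
including the nullary one — is precisely an Eilenberg–Moore `M`-algebra
structure on `x`: `a ∘ η_x = 𝟙 x` and `a ∘ μ_x = a ∘ M a`. -/
theorem monoid_in_TM_iff_eilenberg_moore_algebra
    (M : Monad C) (x : C) (a : M.obj x ⟶ x) :
    (∀ n : ℕ, algIter M x a n = (monadMu M n).app x ≫ a) ↔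
      (M.η.app x ≫ a = 𝟙 x ∧ M.μ.app x ≫ a = M.map a ≫ a) := by
  constructor
  · intro h
    have h0 := h 0
    have h2 := h 2
    simp only [algIter, monadMu, monadPow, Functor.comp_obj, Functor.id_obj, NatTrans.comp_app, Functor.whiskerRight_app, Functor.map_comp,
      Category.assoc, Functor.map_id, Category.id_comp, Monad.right_unit] at h0 h2 ⊢
    refine ⟨h0.symm, ?_⟩
    have := h2.symm
    simp at this
    exact this
  · rintro ⟨hu, hm⟩ n
    induction n with
    | zero => exact hu.symm
    | succ n ih =>
      simp only [algIter, monadMu, monadPow, Functor.comp_obj, Functor.id_obj, NatTrans.comp_app, Functor.whiskerRight_app, ih,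
        Functor.map_comp, Category.assoc, hm]
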